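/- arXiv:2109.12553 — 3 statements merged into one kernel-verified Lean document; each statement's English description precedes it below -/
import Mathlib

section
/- Under the approximation x_T(t) ≡ (1-θ)N, in the infection-time coordinate ξ the undetected infected population satisfies x_I(ξ) = x_I(0) + x_S(0)(1 - e^{-(β/N)ξ}) - γξ - (1/((1-θ)N))∫₀^ξ u(η) dη. -/
/-- Under the approximation x_T ≡ (1-θ)N, the undetected infected
population in the infection-time coordinate ξ(t) = ∫₀ᵗ x_I satisfies
x_I = x_I(0) + x_S(0)(1 - e^{-(β/N)ξ}) - γξ - (1/((1-θ)N))·∫₀^ξ u dη,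
where the last integral in infection time equals ∫₀ᵗ u(s) x_I(s) ds in ordinary time. -/
theorem sidur_infected_formula_infection_time
    (β γ N θ : ℝ) (xS xI u : ℝ → ℝ)
    (hβ : 0 < β) (hγ : 0 < γ) (hN : 0 < N) (hθ : θ ∈ Set.Ico (0:ℝ) 1)
    (hu : Continuous u) (hunn : ∀ t, 0 ≤ u t)
    (hxI : Continuous xI) (hxIpos : ∀ t, 0 < xI t)
    (hS : ∀ t, HasDerivAt xS (-(β / N) * xS t * xI t) t)
    (hI : ∀ t, HasDerivAt xI
      ((β / N) * xS t * xI t - u t * xI t / ((1 - θ) * N) - γ * xI t) t) :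
    ∀ t ≥ (0:ℝ),
      xI t = xI 0 + xS 0 * (1 - Real.exp (-(β / N) * ∫ s in (0:ℝ)..t, xI s))
        - γ * (∫ s in (0:ℝ)..t, xI s)
        - (1 / ((1 - θ) * N)) * ∫ s in (0:ℝ)..t, u s * xI s := by
  intro t ht
  set k : ℝ := β / N with hkdef
  set c : ℝ := (1 - θ) * N with hcdef
  have hc : 0 < c := mul_pos (by linarith [hθ.2]) hN
  set ξ : ℝ → ℝ := fun x => ∫ s in (0:ℝ)..x, xI s with hξdef
  set V : ℝ → ℝ := fun x => ∫ s in (0:ℝ)..x, u s * xI s with hVdef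
  have hξ' : ∀ x : ℝ, HasDerivAt ξ (xI x) x := fun x =>
    intervalIntegral.integral_hasDerivAt_right (hxI.intervalIntegrable 0 x)
      (hxI.stronglyMeasurableAtFilter _ _) hxI.continuousAt
  have huxI : Continuous (fun s => u s * xI s) := hu.mul hxI
  have hV' : ∀ x : ℝ, HasDerivAt V (u x * xI x) x := fun x =>
    intervalIntegral.integral_hasDerivAt_right (huxI.intervalIntegrable 0 x)
      (huxI.stronglyMeasurableAtFilter _ _) huxI.continuousAt
  have hξ0 : ξ 0 = 0 := intervalIntegral.integral_same
  have hV0 : V 0 = 0 := intervalIntegral.integral_same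
  -- xS x = xS 0 * exp (-k * ξ x)
  have hg : ∀ x : ℝ, HasDerivAt (fun y => xS y * Real.exp (k * ξ y)) 0 x := by
    intro x
    have h1 : HasDerivAt (fun y => Real.exp (k * ξ y)) (Real.exp (k * ξ x) * (k * xI x)) x :=
      (((hξ' x).const_mul k).exp)
    have := (hS x).fun_mul h1
    refine this.congr_deriv ?_
    ring
  have hgconst : ∀ x : ℝ, xS x * Real.exp (k * ξ x) = xS 0 := by
    intro x
    have hd : ∀ y, deriv (fun y => xS y * Real.exp (k * ξ y)) y = 0 :=
      fun y => (hg y).deriv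
    have := is_const_of_deriv_eq_zero (fun y => (hg y).differentiableAt) hd x 0
    simpa [hξ0] using this
  have hxSt : ∀ x : ℝ, xS x = xS 0 * Real.exp (-k * ξ x) := by
    intro x
    have h := hgconst x
    rw [neg_mul, Real.exp_neg, eq_comm]
    field_simp
    linarith [h]
  -- conserved quantity
  have hF : ∀ x : ℝ, HasDerivAt (fun y => xI y + xS y + γ * ξ y + (1/c) * V y) 0 x := by
    intro x
    have := (((hI x).fun_add (hS x)).fun_add ((hξ' x).const_mul γ)).fun_add ((hV' x).const_mul (1/c))
    refine this.congr_deriv ?_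
    have hcne : c ≠ 0 := ne_of_gt hc
    field_simp
    ring
  have hFconst : xI t + xS t + γ * ξ t + (1/c) * V t = xI 0 + xS 0 := by
    have hd : ∀ y, deriv (fun y => xI y + xS y + γ * ξ y + (1/c) * V y) y = 0 :=
      fun y => (hF y).deriv
    have := is_const_of_deriv_eq_zero (fun y => (hF y).differentiableAt) hd t 0
    simpa [hξ0, hV0] using this
  have := hxSt t
  show xI t = xI 0 + xS 0 * (1 - Real.exp (-k * ξ t)) - γ * ξ t - (1/c) * V t
  rw [this] at hFconst
  ring_nf
  ring_nf at hFconst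
  linarith [hFconst]
end

section
/- If the testing rate satisfies u(t) > c*(t) := x_T(t)·max(0, (β(t)/N)x_S(t) - γ) for all t in an interval [t*, t₁), then the undetected infected population x_I is strictly decreasing on [t*, t₁) (assuming x_I > 0 there). -/
/-- If u(t) > c*(t) = x_T(t)·max(0, (β(t)/N)x_S(t) - γ) on [t*, t₁),
then x_I is strictly decreasing on [t*, t₁). -/
theorem best_threshold_strict_decrease
    (γ N tstar t₁ : ℝ) (β xS xI xT u : ℝ → ℝ)
    (hγ : 0 < γ) (hN : 0 < N) (htt : tstar < t₁)
    (hβnn : ∀ t, 0 ≤ β t)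
    (hxT : ∀ t, 0 < xT t)
    (hxIpos : ∀ t ∈ Set.Ico tstar t₁, 0 < xI t)
    (hI : ∀ t ∈ Set.Ico tstar t₁,
      HasDerivAt xI ((β t * xS t / N - u t / xT t - γ) * xI t) t)
    (hu : ∀ t ∈ Set.Ico tstar t₁,
      u t > xT t * max 0 (β t / N * xS t - γ)) :
    StrictAntiOn xI (Set.Ico tstar t₁) := by
  apply strictAntiOn_of_deriv_neg (convex_Ico _ _)
  · exact fun t ht => ((hI t ht).continuousAt).continuousWithinAt
  · intro t ht
    rw [interior_Ico] at ht
    have ht' : t ∈ Set.Ico tstar t₁ := ⟨le_of_lt ht.1, ht.2⟩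
    rw [(hI t ht').deriv]
    have hT := hxT t
    have h1 : u t / xT t > max 0 (β t / N * xS t - γ) := by
      rw [gt_iff_lt, lt_div_iff₀ hT, mul_comm]
      exact hu t ht'
    have h2 : β t * xS t / N - u t / xT t - γ < 0 := by
      have : β t / N * xS t - γ ≤ max 0 (β t / N * xS t - γ) := le_max_right _ _
      have := this.trans_lt h1
      have heq : β t * xS t / N = β t / N * xS t := by ring
      linarith
    exact mul_neg_of_neg_of_pos h2 (hxIpos t ht')
end

section
/- The value of the first epidemic peak x_I^{p₁} = x_I(0) + x_S(0)(1 - 1/R₁) - x_S(0)·(1/R₁)·ln R₁, obtained by evaluating x_I(ξ) at ξ = (N/β)ln R₁, is a strictly decreasing function of the testing rate C (for R₁ > 1). -/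
lemma peak_aux_mono : StrictMonoOn (fun R : ℝ => 1 - 1/R - Real.log R / R) (Set.Ici 1) := by
  apply strictMonoOn_of_deriv_pos (convex_Ici 1)
  · apply ContinuousOn.sub
    · apply ContinuousOn.sub continuousOn_const
      exact ContinuousOn.div continuousOn_const continuousOn_id
        (fun x hx => by simp at hx; linarith)
    · exact ContinuousOn.div (Real.continuousOn_log.mono (fun x hx => by
        simp at hx ⊢; linarith)) continuousOn_id
        (fun x hx => by simp at hx; linarith)
  · intro x hx
    rw [interior_Ici] at hx
    have hx1 : (1:ℝ) < x := hx
    have hx0 : x ≠ 0 := by linarith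
    have hx2 : (0:ℝ) < x^2 := by positivity
    have h1 : HasDerivAt (fun R : ℝ => 1 - 1/R - Real.log R / R) (Real.log x / x^2) x := by
      have hinv : HasDerivAt (fun R : ℝ => 1/R) (-(x^2)⁻¹) x := by
        simpa [one_div] using hasDerivAt_inv hx0
      have hld : HasDerivAt (fun R : ℝ => Real.log R / R)
          ((x⁻¹ * x - Real.log x * 1) / x^2) x := by
        simpa using (Real.hasDerivAt_log hx0).fun_div (hasDerivAt_id x) hx0
      have h : HasDerivAt (fun R : ℝ => 1 - 1/R - Real.log R / R) (0 - -(x^2)⁻¹ - (x⁻¹ * x - Real.log x * 1) / x^2) x := ((hasDerivAt_const x (1:ℝ)).sub hinv).sub hld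
      convert h using 1
      rw [inv_mul_cancel₀ hx0]; ring
    rw [h1.deriv]
    exact div_pos (Real.log_pos hx1) hx2

/-- The first epidemic peak value
x_I^{p₁}(C) = x_I(0) + x_S(0)(1 - 1/R₁(C)) - x_S(0)(1/R₁(C))·ln R₁(C),
with R₁(C) = x_S(0)β/(C/(1-θ) + γN), is strictly decreasing in C
on the set of nonnegative testing rates where R₁(C) > 1. -/
theorem first_peak_strictly_decreasing_in_C
    (xS0 xI0 β γ N θ : ℝ)
    (hS0 : 0 < xS0) (hI0 : 0 < xI0) (hβ : 0 < β) (hγ : 0 < γ) (hN : 0 < N)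
    (hθ : θ ∈ Set.Ico (0:ℝ) 1) :
    StrictAntiOn
      (fun C => xI0 + xS0 * (1 - 1 / (xS0 * β / (C / (1 - θ) + γ * N)))
        - xS0 * (1 / (xS0 * β / (C / (1 - θ) + γ * N)))
            * Real.log (xS0 * β / (C / (1 - θ) + γ * N)))
      {C : ℝ | 0 ≤ C ∧ 1 < xS0 * β / (C / (1 - θ) + γ * N)} := by
  obtain ⟨hθ0, hθ1⟩ := hθ
  have hmθ : 0 < 1 - θ := by linarith
  intro C1 hC1 C2 hC2 hlt
  obtain ⟨hC1n, hR1⟩ := hC1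
  obtain ⟨hC2n, hR2⟩ := hC2
  set R1 := xS0 * β / (C1 / (1 - θ) + γ * N) with hR1def
  set R2 := xS0 * β / (C2 / (1 - θ) + γ * N) with hR2def
  have hD1 : 0 < C1 / (1 - θ) + γ * N := by positivity
  have hD2 : 0 < C2 / (1 - θ) + γ * N := by positivity
  have hDlt : C1 / (1 - θ) + γ * N < C2 / (1 - θ) + γ * N := by gcongr
  have hRlt : R2 < R1 :=
    div_lt_div_of_pos_left (by positivity) hD1 hDlt
  have key := peak_aux_mono (Set.mem_Ici.mpr hR2.le) (Set.mem_Ici.mpr (hR2.le.trans hRlt.le)) hRlt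
  simp only at key
  show xI0 + xS0 * (1 - 1 / R2) - xS0 * (1 / R2) * Real.log R2
      < xI0 + xS0 * (1 - 1 / R1) - xS0 * (1 / R1) * Real.log R1
  clear_value R1 R2
  have h2 := mul_lt_mul_of_pos_left key hS0
  have e1 : xS0 * (1 - 1 / R2 - Real.log R2 / R2) = xS0 * (1 - 1/R2) - xS0 * (1/R2) * Real.log R2 := by ring
  have e2 : xS0 * (1 - 1 / R1 - Real.log R1 / R1) = xS0 * (1 - 1/R1) - xS0 * (1/R1) * Real.log R1 := by ring
  rw [e1, e2] at h2
  linarith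
end
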